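/- Let D be a dendron and let u, v be distinct points of D. Then there exists a continuous interval-preserving function f : D → ℝ with values in [0,1] such that f(u) = 0 and f(v) = 1. -/

import Mathlib

/-- A point `w` separates the points `u` and `v` in a topological space `X` if the complement
of `{w}` is the union of two disjoint open sets, one containing `u` and the other `v`. -/
def Separates {X : Type*} [TopologicalSpace X] (w u v : X) : Prop :=
  ∃ U V : Set X, IsOpen U ∧ IsOpen V ∧ u ∈ U ∧ v ∈ V ∧ Disjoint U V ∧ ({w}ᶜ : Set X) = U ∪ V

/-- `w` is between `u` and `v`: `w` separates `u` and `v`, or `w ∈ {u, v}`. -/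
def Between {X : Type*} [TopologicalSpace X] (u w v : X) : Prop :=
  Separates w u v ∨ w = u ∨ w = v

open Set

section Dendron

set_option linter.unusedSectionVars false
variable {D : Type*} [TopologicalSpace D] [ConnectedSpace D]

lemma side_helper {A B : Set D} {w : D} (hA : IsOpen A) (hB : IsOpen B)
    (hd : Disjoint A B) (hcov : ({w}ᶜ : Set D) = A ∪ B)
    {S T : Set D} (hS : IsOpen S) (hT : IsOpen T) (hsub : A ∪ {w} ⊆ S ∪ T)
    (hempty : (A ∪ {w}) ∩ (S ∩ T) = ∅) (hwS : w ∈ S)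
    (hb : ((A ∪ {w}) ∩ T).Nonempty) : False := by
  have huniv : ∀ x : D, x ∈ A ∨ x ∈ B ∨ x = w := by
    intro x
    by_cases hx : x = w
    · exact Or.inr (Or.inr hx)
    · have : x ∈ ({w}ᶜ : Set D) := hx
      rw [hcov] at this
      rcases this with h | h
      · exact Or.inl h
      · exact Or.inr (Or.inl h)
  have hwT : w ∉ T := by
    intro hwT
    have : w ∈ (A ∪ {w}) ∩ (S ∩ T) := ⟨Or.inr rfl, hwS, hwT⟩
    rw [hempty] at this
    exact this
  obtain ⟨b, hbAw, hbT⟩ := hb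
  have hbA : b ∈ A := by
    rcases hbAw with h | h
    · exact h
    · exact absurd (h ▸ hbT) hwT
  have hF : A ∩ T = (B ∪ S)ᶜ := by
    ext x
    constructor
    · rintro ⟨hxA, hxT⟩
      rintro (hxB | hxS)
      · exact hd.ne_of_mem hxA hxB rfl
      · have : x ∈ (A ∪ {w}) ∩ (S ∩ T) := ⟨Or.inl hxA, hxS, hxT⟩
        rw [hempty] at this
        exact this
    · intro hx
      have hxB : x ∉ B := fun h => hx (Or.inl h)
      have hxS : x ∉ S := fun h => hx (Or.inr h)
      rcases huniv x with h | h | h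
      · refine ⟨h, ?_⟩
        rcases hsub (Or.inl h) with h' | h'
        · exact absurd h' hxS
        · exact h'
      · exact absurd h hxB
      · exact absurd (h ▸ hwS) hxS
  have hclopen : IsClopen (A ∩ T) := by
    refine ⟨?_, hA.inter hT⟩
    rw [hF]
    exact (hB.union hS).isClosed_compl
  rcases isClopen_iff.mp hclopen with h | h
  · have : b ∈ (∅ : Set D) := h ▸ ⟨hbA, hbT⟩
    exact this
  · have : w ∈ A ∩ T := h ▸ mem_univ w
    exact hwT this.2

lemma side_preconnected {A B : Set D} {w : D} (hA : IsOpen A) (hB : IsOpen B)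
    (hd : Disjoint A B) (hcov : ({w}ᶜ : Set D) = A ∪ B) :
    IsPreconnected (A ∪ {w}) := by
  intro S T hS hT hsub ⟨a, haAw, haS⟩ ⟨b, hbAw, hbT⟩
  by_contra hne
  have hempty : (A ∪ {w}) ∩ (S ∩ T) = ∅ := not_nonempty_iff_eq_empty.mp hne
  rcases hsub (Or.inr rfl : w ∈ A ∪ {w}) with hwS | hwT
  · exact absurd (side_helper hA hB hd hcov hS hT hsub hempty hwS ⟨b, hbAw, hbT⟩) not_false
  · refine side_helper hA hB hd hcov hT hS (fun x hx => (hsub hx).elim Or.inr Or.inl) ?_ hwT ⟨a, haAw, haS⟩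
    rw [inter_comm S T] at hempty
    exact hempty

lemma mem_of_separates {w a b : D} {C : Set D} (h : Separates w a b)
    (hC : IsPreconnected C) (ha : a ∈ C) (hb : b ∈ C) : w ∈ C := by
  obtain ⟨U, V, hU, hV, haU, hbV, hdis, hcomp⟩ := h
  by_contra hw
  have hsub : C ⊆ U ∪ V := by
    intro x hx
    have : x ∈ ({w}ᶜ : Set D) := by
      intro hxw
      rw [mem_singleton_iff] at hxw
      subst hxw
      exact hw hx
    rw [hcomp] at this
    exact this
  obtain ⟨x, _, hxU, hxV⟩ := hC U V hU hV hsub ⟨a, ha, haU⟩ ⟨b, hb, hbV⟩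
  exact hdis.ne_of_mem hxU hxV rfl


variable {u v : D}

structure Cut (D : Type*) [TopologicalSpace D] (u v : D) where
  A : Set D
  w : D
  openA : IsOpen A
  openB : IsOpen ((A ∪ {w})ᶜ)
  w_notin : w ∉ A
  u_mem : u ∈ A
  v_notin : v ∉ A ∪ {w}

namespace Cut

variable (c : Cut D u v)

def B : Set D := (c.A ∪ {c.w})ᶜ

lemma disj : Disjoint c.A c.B :=
  disjoint_left.mpr fun _ hx hx' => hx' (Or.inl hx)

lemma cov : ({c.w}ᶜ : Set D) = c.A ∪ c.B := by
  ext x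
  constructor
  · intro hx
    by_cases h : x ∈ c.A
    · exact Or.inl h
    · exact Or.inr fun h' => h'.elim h hx
  · rintro (h | h)
    · exact fun h' => c.w_notin (mem_singleton_iff.mp h' ▸ h)
    · exact fun h' => h (Or.inr h')

lemma tri (x : D) : x ∈ c.A ∨ x ∈ c.B ∨ x = c.w := by
  by_cases hx : x = c.w
  · exact Or.inr (Or.inr hx)
  · have : x ∈ ({c.w}ᶜ : Set D) := hx
    rw [c.cov] at this
    exact this.elim Or.inl (fun h => Or.inr (Or.inl h))

lemma w_notin_B : c.w ∉ c.B := fun h => h (Or.inr rfl)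

lemma side_preconn : IsPreconnected (c.A ∪ {c.w}) :=
  side_preconnected c.openA c.openB c.disj c.cov

lemma coside_preconn : IsPreconnected (c.B ∪ {c.w}) := by
  refine side_preconnected c.openB c.openA (c.disj.symm) ?_
  rw [c.cov, union_comm]

lemma closure_A : closure c.A ⊆ c.A ∪ {c.w} :=
  by
  have : IsClosed (c.A ∪ {c.w}) := by
    rw [← compl_compl (c.A ∪ {c.w})]
    exact c.openB.isClosed_compl
  exact closure_minimal subset_union_left this

lemma v_mem_B : v ∈ c.B := c.v_notin

end Cut

/-- The strict ordering between cuts. -/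
def CutLt (c c' : Cut D u v) : Prop := c.A ∪ {c.w} ⊆ c'.A

lemma CutLt.trans' {a b c : Cut D u v} (h1 : CutLt a b) (h2 : CutLt b c) : CutLt a c :=
  h1.trans (subset_union_left.trans h2)

/-- Build a cut from separation data. -/
def cutOf {P Q : Set D} {w : D} (hP : IsOpen P) (hQ : IsOpen Q) (huP : u ∈ P) (hvQ : v ∈ Q)
    (hdis : Disjoint P Q) (hcov : ({w}ᶜ : Set D) = P ∪ Q) : Cut D u v where
  A := P
  w := w
  openA := hP
  openB := by
    have : (P ∪ {w})ᶜ = Q := by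
      ext x
      constructor
      · intro hx
        have hxP : x ∉ P := fun h => hx (Or.inl h)
        have hxw : x ≠ w := fun h => hx (Or.inr h)
        have : x ∈ ({w}ᶜ : Set D) := hxw
        rw [hcov] at this
        exact this.elim (fun h => absurd h hxP) id
      · intro hx
        rintro (h | h)
        · exact hdis.ne_of_mem h hx rfl
        · have : x ∈ ({w}ᶜ : Set D) := by rw [hcov]; exact Or.inr hx
          exact this h
    rw [this]
    exact hQ
  w_notin := fun h => by
    have : w ∈ ({w}ᶜ : Set D) := by rw [hcov]; exact Or.inl h
    exact this rfl
  u_mem := huP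
  v_notin := by
    rintro (h | h)
    · exact hdis.ne_of_mem h hvQ rfl
    · have : v ∈ ({w}ᶜ : Set D) := by rw [hcov]; exact Or.inr hvQ
      exact this h

lemma exists_mid (hsep : ∀ a b : D, a ≠ b → ∃ w, Separates w a b)
    (c c' : Cut D u v) (h : CutLt c c') :
    ∃ m : Cut D u v, CutLt c m ∧ CutLt m c' := by
  have hww' : c.w ≠ c'.w := by
    intro he
    exact c'.w_notin (he ▸ h (Or.inr rfl))
  obtain ⟨w'', hw''⟩ := hsep c.w c'.w hww'
  obtain ⟨P, Q, hP, hQ, hwP, hw'Q, hdis, hcov⟩ := hw''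
  have hw''ne : w'' ≠ c.w := fun he => by
    have : c.w ∈ ({w''}ᶜ : Set D) := by rw [hcov]; exact Or.inl hwP
    exact this he.symm
  have hw''ne' : w'' ≠ c'.w := fun he => by
    have : c'.w ∈ ({w''}ᶜ : Set D) := by rw [hcov]; exact Or.inr hw'Q
    exact this he.symm
  -- w'' lies in c'.A ∪ {c'.w} (connected set containing c.w and c'.w)
  have hw''1 : w'' ∈ c'.A := by
    have hmem : w'' ∈ c'.A ∪ {c'.w} := by
      refine mem_of_separates ⟨P, Q, hP, hQ, hwP, hw'Q, hdis, hcov⟩ c'.side_preconn ?_ (Or.inr rfl)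
      exact Or.inl (h (Or.inr rfl))
    exact hmem.elim id (fun he => absurd he hw''ne')
  -- w'' lies in c.B ∪ {c.w}
  have hw''2 : w'' ∈ c.B := by
    have hw'B : c'.w ∈ c.B := by
      rcases c.tri c'.w with hh | hh | hh
      · exact absurd (c'.w_notin) (by
          intro hn
          exact hn (h (Or.inl hh)))
      · exact hh
      · exact absurd (hh ▸ h (Or.inr rfl) : c'.w ∈ c'.A) c'.w_notin
    have hmem : w'' ∈ c.B ∪ {c.w} := by
      refine mem_of_separates ⟨P, Q, hP, hQ, hwP, hw'Q, hdis, hcov⟩ c.coside_preconn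
        (Or.inr rfl) (Or.inl hw'B)
    exact hmem.elim id (fun he => absurd he hw''ne)
  -- c.A ∪ {c.w} ⊆ P
  have hsideP : c.A ∪ {c.w} ⊆ P := by
    refine (c.side_preconn).subset_left_of_subset_union hP hQ hdis ?_ ⟨c.w, Or.inr rfl, hwP⟩
    intro x hx
    have : x ∈ ({w''}ᶜ : Set D) := fun he => hw''2 (mem_singleton_iff.mp he ▸ hx)
    rw [hcov] at this
    exact this
  -- c'.B ∪ {c'.w} ⊆ Q
  have hsideQ : c'.B ∪ {c'.w} ⊆ Q := by
    have hsub : c'.B ∪ {c'.w} ⊆ P ∪ Q := by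
      intro x hx
      have hxne : x ≠ w'' := by
        rintro rfl
        rcases hx with hh | hh
        · exact hh (Or.inl hw''1)
        · exact hw''ne' hh
      have : x ∈ ({w''}ᶜ : Set D) := hxne
      rw [hcov] at this
      exact this
    refine (c'.coside_preconn).subset_left_of_subset_union hQ hP hdis.symm
      (fun x hx => ((hsub hx).elim Or.inr Or.inl)) ⟨c'.w, Or.inr rfl, hw'Q⟩
  refine ⟨cutOf hP hQ (hsideP (Or.inl c.u_mem)) (hsideQ (Or.inl c'.v_mem_B)) hdis hcov,
    ?_, ?_⟩
  · exact hsideP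
  · rintro x (hx | hx)
    · -- x ∈ P ⊆ c'.A
      rcases c'.tri x with hh | hh | hh
      · exact hh
      · exact absurd (hsideQ (Or.inl hh)) (fun hq => hdis.ne_of_mem hx hq rfl)
      · exact absurd (hsideQ (Or.inr rfl)) (fun hq => hdis.ne_of_mem (hh ▸ hx) hq rfl)
    · exact mem_singleton_iff.mp hx ▸ hw''1


variable (hsep : ∀ a b : D, a ≠ b → ∃ w, Separates w a b)

open Classical in
noncomputable def midCut (c c' : Cut D u v) : Cut D u v :=
  if h : CutLt c c' then (exists_mid hsep c c' h).choose else c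

open Classical in
lemma midCut_spec {c c' : Cut D u v} (h : CutLt c c') :
    CutLt c (midCut hsep c c') ∧ CutLt (midCut hsep c c') c' := by
  rw [midCut, dif_pos h]
  exact (exists_mid hsep c c' h).choose_spec

noncomputable def dy (c0 c1 : Cut D u v) : ℕ → ℕ → Cut D u v
  | 0, k => if k = 0 then c0 else c1
  | (n+1), k =>
      if k % 2 = 0 then dy c0 c1 n (k / 2)
      else midCut hsep (dy c0 c1 n (k / 2)) (dy c0 c1 n (k / 2 + 1))

variable {c0 c1 : Cut D u v}

lemma dy_zero (k : ℕ) : dy hsep c0 c1 0 k = if k = 0 then c0 else c1 := by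
  rw [dy]

lemma dy_succ (n k : ℕ) : dy hsep c0 c1 (n+1) k =
    if k % 2 = 0 then dy hsep c0 c1 n (k / 2)
    else midCut hsep (dy hsep c0 c1 n (k / 2)) (dy hsep c0 c1 n (k / 2 + 1)) := by
  rw [dy]

lemma dy_step (h01 : CutLt c0 c1) :
    ∀ n k, k < 2 ^ n → CutLt (dy hsep c0 c1 n k) (dy hsep c0 c1 n (k + 1)) := by
  intro n
  induction n with
  | zero =>
    intro k hk
    interval_cases k
    rw [dy_zero, dy_zero]
    simpa using h01
  | succ n ih =>
    intro k hk
    rcases Nat.even_or_odd k with ⟨j, hj⟩ | ⟨j, hj⟩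
    · subst hj
      have hj2 : j < 2 ^ n := by
        have : 2 * j < 2 * 2 ^ n := by
          calc 2 * j = j + j := by ring
          _ < 2 ^ (n+1) := hk
          _ = 2 * 2 ^ n := by ring
        omega
      have hstep := ih j hj2
      rw [dy_succ, dy_succ]
      have h2j : (j + j) % 2 = 0 := by omega
      have h2j1 : (j + j + 1) % 2 = 1 := by omega
      rw [if_pos h2j, if_neg (by omega : ¬ (j + j + 1) % 2 = 0)]
      have hd1 : (j + j) / 2 = j := by omega
      have hd2 : (j + j + 1) / 2 = j := by omega
      rw [hd1, hd2]
      exact (midCut_spec hsep hstep).1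
    · subst hj
      have hj2 : j < 2 ^ n := by
        have : 2 * j + 1 < 2 ^ (n+1) := hk
        have : 2 * j + 1 < 2 * 2 ^ n := by
          calc 2 * j + 1 < 2 ^ (n+1) := hk
          _ = 2 * 2 ^ n := by ring
        omega
      have hstep := ih j hj2
      rw [dy_succ, dy_succ]
      rw [if_neg (by omega : ¬ (2 * j + 1) % 2 = 0), if_pos (by omega : (2 * j + 1 + 1) % 2 = 0)]
      have hd1 : (2 * j + 1) / 2 = j := by omega
      have hd2 : (2 * j + 1 + 1) / 2 = j + 1 := by omega
      rw [hd1, hd2]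
      exact (midCut_spec hsep hstep).2

lemma dy_mono (h01 : CutLt c0 c1) {n k k' : ℕ} (hkk : k < k') (hk' : k' ≤ 2 ^ n) :
    CutLt (dy hsep c0 c1 n k) (dy hsep c0 c1 n k') := by
  induction k' with
  | zero => omega
  | succ m ih =>
    rcases Nat.lt_succ_iff_lt_or_eq.mp hkk with h | h
    · exact (ih h (by omega)).trans' (dy_step hsep h01 n m (by omega))
    · subst h
      exact dy_step hsep h01 n k (by omega)

lemma dy_lift (n k : ℕ) : ∀ m, dy hsep c0 c1 (n + m) (k * 2 ^ m) = dy hsep c0 c1 n k := by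
  intro m
  induction m with
  | zero => simp
  | succ m ih =>
    have h1 : k * 2 ^ (m + 1) = (k * 2 ^ m) * 2 := by ring
    rw [← Nat.add_assoc, h1, dy_succ]
    rw [if_pos (by omega : (k * 2 ^ m * 2) % 2 = 0)]
    have : k * 2 ^ m * 2 / 2 = k * 2 ^ m := by omega
    rw [this, ih]

lemma dy_lt_dy (h01 : CutLt c0 c1) {n k n' k' : ℕ} (hk' : k' < 2 ^ n')
    (h : k * 2 ^ n' < k' * 2 ^ n) :
    CutLt (dy hsep c0 c1 n k) (dy hsep c0 c1 n' k') := by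
  rw [← dy_lift hsep n k n', ← dy_lift hsep n' k' n, Nat.add_comm n' n]
  refine dy_mono hsep h01 h ?_
  calc k' * 2 ^ n ≤ 2 ^ n' * 2 ^ n := Nat.mul_le_mul_right _ (le_of_lt hk')
  _ = 2 ^ (n + n') := by rw [← pow_add, Nat.add_comm]

include hsep in
lemma exists_c0c1 (huv : u ≠ v) : ∃ c0 c1 : Cut D u v, CutLt c0 c1 := by
  obtain ⟨w0, U0, V0, hU, hV, huU, hvV, hdis, hcov⟩ := hsep u v huv
  set c0 : Cut D u v := cutOf hU hV huU hvV hdis hcov with hc0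
  have hc0w : c0.w = w0 := rfl
  have hc0A : c0.A = U0 := rfl
  have hw0v : w0 ≠ v := by
    intro h
    have : v ∈ ({w0}ᶜ : Set D) := by rw [hcov]; exact Or.inr hvV
    exact this h.symm
  obtain ⟨w1, P, Q, hP, hQ, hw0P, hvQ, hdisPQ, hcovPQ⟩ := hsep w0 v hw0v
  have hw1w0 : w1 ≠ w0 := by
    intro h
    have : w0 ∈ ({w1}ᶜ : Set D) := by rw [hcovPQ]; exact Or.inl hw0P
    exact this h.symm
  have hw1B : w1 ∈ c0.B := by
    have hmem : w1 ∈ c0.B ∪ {c0.w} := by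
      refine mem_of_separates ⟨P, Q, hP, hQ, hw0P, hvQ, hdisPQ, hcovPQ⟩ c0.coside_preconn
        (Or.inr rfl) (Or.inl c0.v_mem_B)
    exact hmem.elim id (fun he => absurd (hc0w ▸ he) hw1w0)
  have hsideP : c0.A ∪ {c0.w} ⊆ P := by
    refine (c0.side_preconn).subset_left_of_subset_union hP hQ hdisPQ ?_
      ⟨c0.w, Or.inr rfl, hw0P⟩
    intro x hx
    have hxne : x ≠ w1 := by
      rintro rfl
      exact hw1B (hx)
    have : x ∈ ({w1}ᶜ : Set D) := hxne
    rw [hcovPQ] at this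
    exact this
  exact ⟨c0, cutOf hP hQ (hsideP (Or.inl huU)) hvQ hdisPQ hcovPQ, hsideP⟩

lemma dy_eq_dy {n k n' k' : ℕ} (h : k * 2 ^ n' = k' * 2 ^ n) :
    dy hsep c0 c1 n k = dy hsep c0 c1 n' k' := by
  rw [← dy_lift hsep n k n', ← dy_lift hsep n' k' n, Nat.add_comm n' n, h]

end Dendron

lemma val_lt_val {n k n' k' : ℕ} :
    (k : ℝ) / 2 ^ n < (k' : ℝ) / 2 ^ n' ↔ k * 2 ^ n' < k' * 2 ^ n := by
  rw [div_lt_div_iff₀ (by positivity) (by positivity)]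
  constructor
  · intro h
    exact_mod_cast h
  · intro h
    exact_mod_cast h

lemma dyadic_btwn {x y : ℝ} (hx : 0 ≤ x) (hxy : x < y) :
    ∃ n k : ℕ, x < (k : ℝ) / 2 ^ n ∧ (k : ℝ) / 2 ^ n < y := by
  obtain ⟨n, hn⟩ := exists_pow_lt_of_lt_one (sub_pos.mpr hxy) (by norm_num : (1:ℝ)/2 < 1)
  have h2n : ((1:ℝ)/2) ^ n = 1 / 2 ^ n := by rw [div_pow, one_pow]
  refine ⟨n, ⌊x * 2 ^ n⌋₊ + 1, ?_, ?_⟩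
  · have h1 : x * 2 ^ n < ⌊x * 2 ^ n⌋₊ + 1 := Nat.lt_floor_add_one _
    rw [lt_div_iff₀ (by positivity : (0:ℝ) < 2 ^ n)]
    exact_mod_cast h1
  · have h2 : (⌊x * 2 ^ n⌋₊ : ℝ) ≤ x * 2 ^ n := Nat.floor_le (by positivity)
    rw [div_lt_iff₀ (by positivity : (0:ℝ) < 2 ^ n)]
    push_cast
    have : x * 2 ^ n + 1 < y * 2 ^ n := by
      have hpow : (1:ℝ) < (y - x) * 2 ^ n := by
        rw [h2n] at hn
        rw [div_lt_iff₀ (by positivity : (0:ℝ) < 2 ^ n)] at hn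
        linarith [hn]
      nlinarith [hpow]
    linarith

/-- On a dendron, every pair of distinct points is separated by a continuous
interval-preserving function into `[0,1]`. -/
theorem stmt_9 {D : Type*} [TopologicalSpace D] [CompactSpace D] [T2Space D] [ConnectedSpace D]
    (hsep : ∀ u v : D, u ≠ v → ∃ w, Separates w u v)
    (u v : D) (huv : u ≠ v) :
    ∃ f : D → ℝ, Continuous f ∧ (∀ x, f x ∈ Set.Icc (0 : ℝ) 1) ∧
      (∀ a w b : D, Between a w b → min (f a) (f b) ≤ f w ∧ f w ≤ max (f a) (f b)) ∧
      f u = 0 ∧ f v = 1 := by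
  obtain ⟨c0, c1, h01⟩ := exists_c0c1 hsep huv
  set g : ℕ → ℕ → Cut D u v := dy hsep c0 c1 with hg
  set Qs : D → Set ℝ :=
    fun x => {r : ℝ | ∃ n k : ℕ, 0 < k ∧ k < 2 ^ n ∧ r = (k : ℝ) / 2 ^ n ∧ x ∈ (g n k).A}
    with hQs
  set f : D → ℝ := fun x => sInf (insert (1 : ℝ) (Qs x)) with hf
  -- basic facts
  have hbdd : ∀ x, BddBelow (insert (1 : ℝ) (Qs x)) := by
    intro x
    refine ⟨0, ?_⟩
    rintro r (rfl | ⟨n, k, hk0, hkn, rfl, hx⟩)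
    · norm_num
    · positivity
  have hne : ∀ x, (insert (1 : ℝ) (Qs x)).Nonempty := fun x => ⟨1, mem_insert _ _⟩
  have hf_le : ∀ x (n k : ℕ), 0 < k → k < 2 ^ n → x ∈ (g n k).A → f x ≤ (k : ℝ) / 2 ^ n := by
    intro x n k hk0 hkn hx
    exact csInf_le (hbdd x) (mem_insert_of_mem _ ⟨n, k, hk0, hkn, rfl, hx⟩)
  have hf_le_one : ∀ x, f x ≤ 1 := fun x => csInf_le (hbdd x) (mem_insert _ _)
  have hf_nonneg : ∀ x, 0 ≤ f x := by
    intro x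
    refine le_csInf (hne x) ?_
    rintro r (rfl | ⟨n, k, hk0, hkn, rfl, hx⟩)
    · norm_num
    · positivity
  have hlt_f : ∀ x (n k : ℕ), 0 < k → k < 2 ^ n → x ∉ (g n k).A → (k : ℝ) / 2 ^ n ≤ f x := by
    intro x n k hk0 hkn hx
    refine le_csInf (hne x) ?_
    rintro r (rfl | ⟨n', k', hk0', hkn', rfl, hx'⟩)
    · rw [div_le_one (by positivity)]
      exact_mod_cast hkn.le
    · by_contra hr
      push_neg at hr
      have hnat : k' * 2 ^ n < k * 2 ^ n' := val_lt_val.mp hr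
      have hlt := dy_lt_dy hsep h01 hkn hnat
      exact hx (hlt (Or.inl hx'))
  have hmem_of_lt : ∀ x (n k : ℕ), 0 < k → k < 2 ^ n → f x < (k : ℝ) / 2 ^ n →
      x ∈ (g n k).A := by
    intro x n k hk0 hkn hx
    by_contra hc
    exact absurd hx (not_lt.mpr (hlt_f x n k hk0 hkn hc))
  have hw_le : ∀ (n k : ℕ), 0 < k → k < 2 ^ n → f ((g n k).w) ≤ (k : ℝ) / 2 ^ n := by
    intro n k hk0 hkn
    by_contra hcon
    push_neg at hcon
    obtain ⟨n', k', h2, h3⟩ := dyadic_btwn (by positivity : (0:ℝ) ≤ (k : ℝ) / 2 ^ n) hcon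
    have hk0' : 0 < k' := by
      rcases Nat.eq_zero_or_pos k' with rfl | h
      · simp only [Nat.cast_zero, zero_div] at h2
        have : (0:ℝ) < (k : ℝ) / 2 ^ n := by positivity
        linarith
      · exact h
    have hkn' : k' < 2 ^ n' := by
      have h4 : (k' : ℝ) / 2 ^ n' < 1 := lt_of_lt_of_le h3 (hf_le_one _)
      rw [div_lt_one (by positivity)] at h4
      exact_mod_cast h4
    have hnat : k * 2 ^ n' < k' * 2 ^ n := val_lt_val.mp h2
    have hlt := dy_lt_dy hsep h01 hkn' hnat
    have : (g n k).w ∈ (g n' k').A := hlt (Or.inr rfl)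
    have := hf_le _ n' k' hk0' hkn' this
    linarith
  refine ⟨f, ?_, ?_, ?_, ?_, ?_⟩
  · -- continuity
    refine continuous_iff_continuousAt.mpr fun x => ?_
    rw [ContinuousAt, Metric.tendsto_nhds]
    intro ε hε
    have hub : ∃ N : Set D, IsOpen N ∧ x ∈ N ∧ ∀ y ∈ N, f y < f x + ε := by
      by_cases h1 : 1 < f x + ε
      · exact ⟨univ, isOpen_univ, mem_univ x, fun y _ => lt_of_le_of_lt (hf_le_one y) h1⟩
      · push_neg at h1
        have hlt : f x < min (f x + ε) 1 := lt_min (by linarith) (by linarith)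
        obtain ⟨n, k, h2, h3⟩ := dyadic_btwn (hf_nonneg x) hlt
        have hk0 : 0 < k := by
          rcases Nat.eq_zero_or_pos k with rfl | h
          · simp only [Nat.cast_zero, zero_div] at h2
            linarith [hf_nonneg x]
          · exact h
        have hkn : k < 2 ^ n := by
          have h4 : (k : ℝ) / 2 ^ n < 1 := lt_of_lt_of_le h3 (min_le_right _ _)
          rw [div_lt_one (by positivity)] at h4
          exact_mod_cast h4
        refine ⟨(g n k).A, (g n k).openA, hmem_of_lt x n k hk0 hkn h2, fun y hy => ?_⟩
        have h5 := hf_le y n k hk0 hkn hy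
        have h6 : (k : ℝ) / 2 ^ n < f x + ε := lt_of_lt_of_le h3 (min_le_left _ _)
        linarith
    have hlb : ∃ N : Set D, IsOpen N ∧ x ∈ N ∧ ∀ y ∈ N, f x - ε < f y := by
      by_cases h1 : f x - ε < 0
      · exact ⟨univ, isOpen_univ, mem_univ x, fun y _ => lt_of_lt_of_le h1 (hf_nonneg y)⟩
      · push_neg at h1
        obtain ⟨n, k, h2, h3⟩ := dyadic_btwn h1 (by linarith : f x - ε < f x)
        have hk0 : 0 < k := by
          rcases Nat.eq_zero_or_pos k with rfl | h
          · simp only [Nat.cast_zero, zero_div] at h2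
            linarith
          · exact h
        have hkn : k < 2 ^ n := by
          have h4 : (k : ℝ) / 2 ^ n < 1 := lt_of_lt_of_le h3 (hf_le_one x)
          rw [div_lt_one (by positivity)] at h4
          exact_mod_cast h4
        refine ⟨((g n k).A ∪ {(g n k).w})ᶜ, (g n k).openB, ?_, fun y hy => ?_⟩
        · rintro (hx | hx)
          · have := hf_le x n k hk0 hkn hx
            linarith
          · have := hw_le n k hk0 hkn
            rw [mem_singleton_iff] at hx
            rw [← hx] at this
            linarith
        · have hyA : y ∉ (g n k).A := fun h => hy (Or.inl h)
          have := hlt_f y n k hk0 hkn hyA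
          linarith
    obtain ⟨N1, hN1o, hxN1, hN1⟩ := hub
    obtain ⟨N2, hN2o, hxN2, hN2⟩ := hlb
    filter_upwards [hN1o.mem_nhds hxN1, hN2o.mem_nhds hxN2] with y h1 h2
    rw [Real.dist_eq, abs_sub_lt_iff]
    constructor
    · linarith [hN1 y h1]
    · linarith [hN2 y h2]
  · exact fun x => ⟨hf_nonneg x, hf_le_one x⟩
  · -- interval preserving
    intro a w b hbet
    rcases hbet with hsepw | rfl | rfl
    · obtain ⟨P, Q, hP, hQ, haP, hbQ, hdis, hcov⟩ := hsepw
      constructor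
      · by_contra hcon
        push_neg at hcon
        obtain ⟨n, k, h2, h3⟩ := dyadic_btwn (hf_nonneg w) hcon
        have hk0 : 0 < k := by
          rcases Nat.eq_zero_or_pos k with rfl | h
          · simp only [Nat.cast_zero, zero_div] at h2
            linarith [hf_nonneg w]
          · exact h
        have hkn : k < 2 ^ n := by
          have h4 : (k : ℝ) / 2 ^ n < 1 :=
            lt_of_lt_of_le h3 ((min_le_left _ _).trans (hf_le_one a))
          rw [div_lt_one (by positivity)] at h4
          exact_mod_cast h4
        set c := g n k with hc
        have hwA : w ∈ c.A := hmem_of_lt w n k hk0 hkn h2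
        have hwcw : w ≠ c.w := fun h => c.w_notin (h ▸ hwA)
        have haB : a ∈ c.B := by
          rcases c.tri a with h | h | h
          · have := hf_le a n k hk0 hkn h
            have := min_le_left (f a) (f b)
            linarith
          · exact h
          · have := hw_le n k hk0 hkn
            rw [← h] at this
            have := min_le_left (f a) (f b)
            linarith
        have hbB : b ∈ c.B := by
          rcases c.tri b with h | h | h
          · have := hf_le b n k hk0 hkn h
            have := min_le_right (f a) (f b)
            linarith
          · exact h
          · have := hw_le n k hk0 hkn
            rw [← h] at this
            have := min_le_right (f a) (f b)
            linarith
        have hsub : c.B ∪ {c.w} ⊆ P ∪ Q := by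
          intro x hx
          have hxw : x ≠ w := by
            rintro rfl
            rcases hx with h | h
            · exact h (Or.inl hwA)
            · exact hwcw h
          have : x ∈ ({w}ᶜ : Set D) := hxw
          rw [hcov] at this
          exact this
        have hPside := (c.coside_preconn).subset_left_of_subset_union hP hQ hdis hsub
          ⟨a, Or.inl haB, haP⟩
        exact hdis.ne_of_mem (hPside (Or.inl hbB)) hbQ rfl
      · by_contra hcon
        push_neg at hcon
        obtain ⟨n, k, h2, h3⟩ := dyadic_btwn (le_trans (hf_nonneg a) (le_max_left _ _)) hcon
        have hk0 : 0 < k := by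
          rcases Nat.eq_zero_or_pos k with rfl | h
          · simp only [Nat.cast_zero, zero_div] at h2
            linarith [hf_nonneg a, le_max_left (f a) (f b)]
          · exact h
        have hkn : k < 2 ^ n := by
          have h4 : (k : ℝ) / 2 ^ n < 1 := lt_of_lt_of_le h3 (hf_le_one w)
          rw [div_lt_one (by positivity)] at h4
          exact_mod_cast h4
        set c := g n k with hc
        have haA : a ∈ c.A :=
          hmem_of_lt a n k hk0 hkn (lt_of_le_of_lt (le_max_left _ _) h2)
        have hbA : b ∈ c.A :=
          hmem_of_lt b n k hk0 hkn (lt_of_le_of_lt (le_max_right _ _) h2)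
        have hwA : w ∉ c.A := by
          intro h
          have := hf_le w n k hk0 hkn h
          linarith
        have hwcw : w ≠ c.w := by
          intro h
          have := hw_le n k hk0 hkn
          rw [← h] at this
          linarith
        have hsub : c.A ∪ {c.w} ⊆ P ∪ Q := by
          intro x hx
          have hxw : x ≠ w := by
            rintro rfl
            rcases hx with h | h
            · exact hwA h
            · exact hwcw h
          have : x ∈ ({w}ᶜ : Set D) := hxw
          rw [hcov] at this
          exact this
        have hPside := (c.side_preconn).subset_left_of_subset_union hP hQ hdis hsub
          ⟨a, Or.inl haA, haP⟩
        exact hdis.ne_of_mem (hPside (Or.inl hbA)) hbQ rfl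
    · exact ⟨min_le_left _ _, le_max_left _ _⟩
    · exact ⟨min_le_right _ _, le_max_right _ _⟩
  · -- f u = 0
    refine le_antisymm ?_ (hf_nonneg u)
    by_contra h
    push_neg at h
    obtain ⟨n, hn⟩ := exists_pow_lt_of_lt_one h (by norm_num : (1:ℝ)/2 < 1)
    rw [div_pow, one_pow] at hn
    rcases Nat.eq_zero_or_pos n with rfl | hn0
    · norm_num at hn
      linarith [hf_le_one u]
    · have hn1 : 1 < 2 ^ n := Nat.one_lt_two_pow_iff.mpr (by omega)
      have := hf_le u n 1 one_pos hn1 (g n 1).u_mem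
      push_cast at this
      linarith
  · -- f v = 1
    have hQv : Qs v = ∅ := by
      rw [eq_empty_iff_forall_notMem]
      rintro r ⟨n, k, hk0, hkn, rfl, hv⟩
      exact (g n k).v_notin (Or.inl hv)
    rw [hf]
    simp only [hQv, insert_empty_eq]
    exact csInf_singleton 1
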